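/- Assume ūB(0) > ūA(0) and ūA(1) > ūB(1). (i) If c ∈ (0,1] is such that ūB(y) > ūA(y) for all y ∈ (0, c), then every solution z of the abstract imitation dynamics with z(0) ∈ [0, c) satisfies z(t) → 0 as t → ∞. (ii) If c ∈ [0,1) is such that ūA(y) > ūB(y) for all y ∈ (c, 1), then every solution z with z(0) ∈ (c, 1] satisfies z(t) → 1 as t → ∞. -/

import Mathlib

open scoped Classical
open MeasureTheory Filter Set

/-- Maximum of finitely many polynomial utilities at `y`. -/
noncomputable def ubar {p : ℕ} (u : Fin p → Polynomial ℝ) (y : ℝ) : ℝ :=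
  ⨆ i, (u i).eval y

/-- The set-valued map of the abstract imitation dynamics. -/
noncomputable def Xset {p : ℕ} (uA uB : Fin p → Polynomial ℝ) (z : ℝ) : Set ℝ :=
  if ubar uB z < ubar uA z then {1 - z}
  else if ubar uA z < ubar uB z then {-z}
  else Set.Icc (-z) (1 - z)

/-- A (Carathéodory) solution of the abstract imitation dynamics on `[0,∞)`:
a locally absolutely continuous `[0,1]`-valued function whose derivative lies in
`Xset` almost everywhere, expressed in integral form. -/
def IsAbsSol {p : ℕ} (uA uB : Fin p → Polynomial ℝ) (z : ℝ → ℝ) : Prop :=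
  (∀ t, 0 ≤ t → z t ∈ Set.Icc (0:ℝ) 1) ∧
  ∃ v : ℝ → ℝ,
    (∀ᵐ t ∂(MeasureTheory.volume.restrict (Set.Ici (0:ℝ))), v t ∈ Xset uA uB (z t)) ∧
    (∀ t, 0 ≤ t → IntervalIntegrable v MeasureTheory.volume 0 t) ∧
    (∀ t, 0 ≤ t → z t = z 0 + ∫ s in (0:ℝ)..t, v s)

lemma ubar_comp {p : ℕ} (u : Fin p → Polynomial ℝ) (y : ℝ) :
    ubar (fun i => (u i).comp (1 - Polynomial.X)) y = ubar u (1 - y) := by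
  simp [ubar, Polynomial.eval_comp]

lemma Xset_flip {p : ℕ} (uA uB : Fin p → Polynomial ℝ) (y w : ℝ) (hw : w ∈ Xset uA uB y) :
    -w ∈ Xset (fun i => (uB i).comp (1 - Polynomial.X))
      (fun i => (uA i).comp (1 - Polynomial.X)) (1 - y) := by
  have e1 : ubar (fun i => (uB i).comp (1 - Polynomial.X)) (1 - y) = ubar uB y := by
    rw [ubar_comp]; ring_nf
  have e2 : ubar (fun i => (uA i).comp (1 - Polynomial.X)) (1 - y) = ubar uA y := by
    rw [ubar_comp]; ring_nf
  unfold Xset at hw ⊢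
  rw [e1, e2]
  rcases lt_trichotomy (ubar uA y) (ubar uB y) with h | h | h
  · rw [if_neg (not_lt.2 h.le), if_pos h] at hw
    rw [if_pos h]
    simp only [mem_singleton_iff] at hw ⊢
    linarith
  · rw [if_neg (not_lt.2 h.le), if_neg (not_lt.2 h.ge)] at hw
    rw [if_neg (not_lt.2 h.ge), if_neg (not_lt.2 h.le)]
    rw [mem_Icc] at hw ⊢
    constructor <;> linarith [hw.1, hw.2]
  · rw [if_pos h] at hw
    rw [if_neg (not_lt.2 h.le), if_pos h]
    simp only [mem_singleton_iff] at hw ⊢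
    linarith

lemma key_conv {p : ℕ} (uA uB : Fin p → Polynomial ℝ)
    (h0 : ubar uA 0 < ubar uB 0) :
    ∀ c : ℝ, c ∈ Set.Ioc (0:ℝ) 1 →
      (∀ y ∈ Set.Ioo (0:ℝ) c, ubar uA y < ubar uB y) →
      ∀ z : ℝ → ℝ, IsAbsSol uA uB z → z 0 ∈ Set.Ico (0:ℝ) c →
        Filter.Tendsto z Filter.atTop (nhds (0:ℝ)) := by
  intro c hc hB z hz hz0
  obtain ⟨hz01, v, hv_mem, hv_int, hz_eq⟩ := hz
  obtain ⟨hz00, hz0c⟩ := hz0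
  -- on [0,c) the set map is {-y}
  have hXs : ∀ y : ℝ, 0 ≤ y → y < c → Xset uA uB y = {-y} := by
    intro y hy0 hyc
    have hlt : ubar uA y < ubar uB y := by
      rcases eq_or_lt_of_le hy0 with h | h
      · rw [← h]; exact h0
      · exact hB y ⟨h, hyc⟩
    unfold Xset
    rw [if_neg (not_lt.2 hlt.le), if_pos hlt]
  -- continuity of z on [0,∞)
  have hcont : ContinuousOn z (Ici 0) := by
    intro t ht
    have hb : (0:ℝ) ≤ t + 1 := by exact le_trans ht (by linarith [mem_Ici.1 ht])
    have hprim : ContinuousOn (fun x => ∫ s in (0:ℝ)..x, v s) (uIcc (0:ℝ) (t+1)) :=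
      intervalIntegral.continuousOn_primitive_interval' (hv_int (t+1) hb) left_mem_uIcc
    have huicc : uIcc (0:ℝ) (t+1) = Icc 0 (t+1) := uIcc_of_le hb
    rw [huicc] at hprim
    have hcz : ContinuousOn z (Icc 0 (t+1)) :=
      ContinuousOn.congr (f := fun x => z 0 + ∫ s in (0:ℝ)..x, v s)
        ((continuousOn_const (c := z 0)).add hprim) (fun x hx => hz_eq x hx.1)
    have ht' : t ∈ Icc (0:ℝ) (t+1) := ⟨mem_Ici.1 ht, by linarith⟩
    have h2 : ContinuousWithinAt z (Ici 0 ∩ Iio (t+1)) t :=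
      (hcz t ht').mono (fun x hx => ⟨hx.1, hx.2.le⟩)
    exact (continuousWithinAt_inter (Iio_mem_nhds (lt_add_one t))).1 h2
  -- invariance: z stays below c₀
  set c₀ : ℝ := (z 0 + c) / 2 with hc₀
  have hzc₀ : z 0 < c₀ := by simp only [hc₀]; linarith
  have hc₀c : c₀ < c := by simp only [hc₀]; linarith
  have hinv : ∀ t : ℝ, 0 ≤ t → z t < c₀ := by
    by_contra hcon
    push_neg at hcon
    obtain ⟨t₀, ht₀, ht₀c⟩ := hcon
    set S : Set ℝ := Ici 0 ∩ z ⁻¹' (Ici c₀) with hS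
    have hSne : S.Nonempty := ⟨t₀, ht₀, ht₀c⟩
    have hSbdd : BddBelow S := ⟨0, fun x hx => hx.1⟩
    have hSclosed : IsClosed S :=
      hcont.preimage_isClosed_of_isClosed isClosed_Ici isClosed_Ici
    set T : ℝ := sInf S with hT
    have hTS : T ∈ S := hSclosed.csInf_mem hSne hSbdd
    have hT0 : 0 ≤ T := hTS.1
    have hTz : c₀ ≤ z T := hTS.2
    have hltT : ∀ s : ℝ, 0 ≤ s → s < T → z s < c₀ := by
      intro s hs0 hsT
      by_contra hcon2
      push_neg at hcon2
      exact absurd (csInf_le hSbdd ⟨hs0, hcon2⟩) (not_le.2 hsT)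
    have hT0' : 0 < T := by
      rcases eq_or_lt_of_le hT0 with h | h
      · exfalso; rw [← h] at hTz; exact absurd hTz (not_le.2 hzc₀)
      · exact h
    -- a.e. on [0,T], v ≤ 0
    have haeT : ∀ᵐ s ∂volume.restrict (Icc (0:ℝ) T), 0 ≤ -v s := by
      have hsub : Icc (0:ℝ) T ⊆ Ici 0 := fun x hx => hx.1
      have h1 := ae_restrict_of_ae_restrict_of_subset hsub hv_mem
      have hne : ∀ᵐ s ∂volume.restrict (Icc (0:ℝ) T), s ≠ T := by
        refine ae_restrict_of_ae ?_
        rw [ae_iff]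
        simp only [ne_eq, not_not, Set.setOf_eq_eq_singleton]
        exact measure_singleton T
      filter_upwards [h1, hne, ae_restrict_mem measurableSet_Icc] with s hs hsne hsmem
      have hsT : s < T := lt_of_le_of_ne hsmem.2 hsne
      have hzs : z s < c₀ := hltT s hsmem.1 hsT
      rw [hXs (z s) (hz01 s hsmem.1).1 (hzs.trans hc₀c)] at hs
      rw [mem_singleton_iff] at hs
      rw [hs]
      simp [(hz01 s hsmem.1).1]
    have hint : 0 ≤ ∫ s in (0:ℝ)..T, -v s :=
      intervalIntegral.integral_nonneg_of_ae_restrict hT0 haeT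
    rw [intervalIntegral.integral_neg] at hint
    have := hz_eq T hT0
    have : z T ≤ z 0 := by linarith
    linarith
  -- a.e., v = -z
  have haev : ∀ᵐ t ∂volume.restrict (Ici (0:ℝ)), v t = -z t := by
    filter_upwards [hv_mem, ae_restrict_mem measurableSet_Ici] with t ht htm
    rw [hXs (z t) (hz01 t htm).1 ((hinv t htm).trans hc₀c)] at ht
    exact mem_singleton_iff.1 ht
  -- z is antitone on [0,∞)
  have hanti : ∀ t₁ t₂ : ℝ, 0 ≤ t₁ → t₁ ≤ t₂ → z t₂ ≤ z t₁ := by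
    intro t₁ t₂ h1 h12
    have h2 : (0:ℝ) ≤ t₂ := h1.trans h12
    have hi1 : IntervalIntegrable v volume 0 t₁ := hv_int t₁ h1
    have hi2 : IntervalIntegrable v volume t₁ t₂ := by
      refine (hv_int t₂ h2).mono_set (uIcc_subset_uIcc ?_ ?_)
      · rw [uIcc_of_le h2]; exact ⟨h1, h12⟩
      · exact right_mem_uIcc
    have hadd : (∫ s in (0:ℝ)..t₁, v s) + ∫ s in t₁..t₂, v s = ∫ s in (0:ℝ)..t₂, v s :=
      intervalIntegral.integral_add_adjacent_intervals hi1 hi2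
    have hneg : 0 ≤ ∫ s in t₁..t₂, -v s := by
      refine intervalIntegral.integral_nonneg_of_ae_restrict h12 ?_
      have hsub : Icc t₁ t₂ ⊆ Ici (0:ℝ) := fun x hx => h1.trans hx.1
      filter_upwards [ae_restrict_of_ae_restrict_of_subset hsub haev,
        ae_restrict_mem measurableSet_Icc] with s hs hsm
      rw [hs]
      simp [(hz01 s (h1.trans hsm.1)).1]
    rw [intervalIntegral.integral_neg] at hneg
    have e1 := hz_eq t₁ h1
    have e2 := hz_eq t₂ h2
    linarith
  -- conclusion
  rw [Metric.tendsto_atTop]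
  intro ε hε
  refine ⟨max 1 (z 0 / ε + 1), fun t ht => ?_⟩
  have ht1 : (1:ℝ) ≤ t := le_trans (le_max_left _ _) ht
  have ht0 : (0:ℝ) ≤ t := by linarith
  have htN : z 0 / ε + 1 ≤ t := le_trans (le_max_right _ _) ht
  have hzt0 : 0 ≤ z t := (hz01 t ht0).1
  have hlt : z t < ε := by
    by_contra hcon
    push_neg at hcon
    -- z s ≥ ε for all s ∈ [0,t]
    have hge : ∀ s, s ∈ Icc (0:ℝ) t → ε ≤ z s := fun s hs =>
      hcon.trans (hanti s t hs.1 hs.2)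
    have hmono : (∫ s in (0:ℝ)..t, v s) ≤ ∫ s in (0:ℝ)..t, (-ε : ℝ) := by
      refine intervalIntegral.integral_mono_ae_restrict ht0 (hv_int t ht0)
        intervalIntegrable_const ?_
      have hsub : Icc (0:ℝ) t ⊆ Ici (0:ℝ) := fun x hx => hx.1
      filter_upwards [ae_restrict_of_ae_restrict_of_subset hsub haev,
        ae_restrict_mem measurableSet_Icc] with s hs hsm
      rw [hs]
      have := hge s hsm
      linarith
    rw [intervalIntegral.integral_const, smul_eq_mul, sub_zero] at hmono
    have heq := hz_eq t ht0
    have htε : z 0 + ε ≤ ε * t := by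
      have h1 : ε * (z 0 / ε + 1) ≤ ε * t := by
        exact mul_le_mul_of_nonneg_left htN hε.le
      rw [mul_add, mul_one, mul_div_cancel₀ _ (ne_of_gt hε)] at h1
      exact h1
    have : z t ≤ z 0 + t * (-ε) := by linarith
    nlinarith
  rw [Real.dist_eq, sub_zero, abs_of_nonneg hzt0]
  exact hlt

theorem abstract_convergence_to_extremes
    {p : ℕ} (hp : 0 < p) (uA uB : Fin p → Polynomial ℝ)
    (h0 : ubar uA 0 < ubar uB 0) (h1 : ubar uB 1 < ubar uA 1) :
    (∀ c : ℝ, c ∈ Set.Ioc (0:ℝ) 1 →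
      (∀ y ∈ Set.Ioo (0:ℝ) c, ubar uA y < ubar uB y) →
      ∀ z : ℝ → ℝ, IsAbsSol uA uB z → z 0 ∈ Set.Ico (0:ℝ) c →
        Filter.Tendsto z Filter.atTop (nhds (0:ℝ))) ∧
    (∀ c : ℝ, c ∈ Set.Ico (0:ℝ) 1 →
      (∀ y ∈ Set.Ioo c 1, ubar uB y < ubar uA y) →
      ∀ z : ℝ → ℝ, IsAbsSol uA uB z → z 0 ∈ Set.Ioc c 1 →
        Filter.Tendsto z Filter.atTop (nhds (1:ℝ))) := by
  constructor
  · exact key_conv uA uB h0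
  · intro c hc hA z hz hz0
    set uA' := fun i => (uB i).comp (1 - Polynomial.X) with huA'
    set uB' := fun i => (uA i).comp (1 - Polynomial.X) with huB'
    have h0' : ubar uA' 0 < ubar uB' 0 := by
      rw [huA', huB', ubar_comp, ubar_comp]
      norm_num
      exact h1
    obtain ⟨hz01, v, hv_mem, hv_int, hz_eq⟩ := hz
    have hsol : IsAbsSol uA' uB' (fun t => 1 - z t) := by
      refine ⟨fun t ht => ?_, -v, ?_, fun t ht => (hv_int t ht).neg, fun t ht => ?_⟩
      · obtain ⟨ha, hb⟩ := hz01 t ht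
        exact ⟨by simp only []; linarith, by simp only []; linarith⟩
      · filter_upwards [hv_mem] with t ht
        exact Xset_flip uA uB (z t) (v t) ht
      · simp only [Pi.neg_apply, intervalIntegral.integral_neg]
        have := hz_eq t ht
        linarith
    have hkey := key_conv uA' uB' h0' (1 - c) ⟨by linarith [hc.2], by linarith [hc.1]⟩
      (fun y hy => by
        rw [huA', huB', ubar_comp, ubar_comp]
        exact hA (1 - y) ⟨by linarith [hy.2], by linarith [hy.1]⟩)
      (fun t => 1 - z t) hsol ⟨by show (0:ℝ) ≤ 1 - z 0; linarith [hz0.2], by show 1 - z 0 < 1 - c; linarith [hz0.1]⟩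
    have : Tendsto (fun t => 1 - (1 - z t)) atTop (nhds (1 - 0)) :=
      tendsto_const_nhds.sub hkey
    simpa using this
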